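/- Let G = (V, ω) be a finite weighted graph with vertex measure μ, let h, f : V → ℝ with f_i > 0 for all i, and let α ≥ p > 1. Set β = inf{I(φ) : φ ≥ 0, φ ≢ 0}. Then there exists φ̂ : V → ℝ with φ̂ ≥ 0, ∫_V f φ̂^α dμ = 1 (in particular φ̂ ≢ 0), and I(φ̂) = β; i.e. the infimum of the energy functional is attained. -/

import Mathlib

/-- The gradient energy `∫_E |∇φ|^p dω = (1/2) ∑_{i,j} ω_ij |φ_j − φ_i|^p`. -/
noncomputable def gradEnergy {V : Type*} [Fintype V] (ω : V → V → ℝ) (p : ℝ)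
    (φ : V → ℝ) : ℝ :=
  (1 / 2) * ∑ i, ∑ j, ω i j * |φ j - φ i| ^ p

/-- The energy functional
`I(φ) = (∫_E |∇φ|^p dω − ∫_V h φ^p dμ) (∫_V f φ^α dμ)^{−p/α}`. -/
noncomputable def energy {V : Type*} [Fintype V] (μ : V → ℝ) (ω : V → V → ℝ)
    (h f : V → ℝ) (p α : ℝ) (φ : V → ℝ) : ℝ :=
  (gradEnergy ω p φ - ∑ i, μ i * (h i * φ i ^ p)) *
    (∑ i, μ i * (f i * φ i ^ α)) ^ (-(p / α))

/-- Scaling invariance of the energy functional: `I(cφ) = I(φ)` for `c > 0`,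
`φ ≥ 0`, provided the denominator is positive. -/
lemma energy_smul {V : Type*} [Fintype V] (μ : V → ℝ) (ω : V → V → ℝ)
    (h f : V → ℝ) (p α : ℝ) (hp : 1 < p) (hpα : p ≤ α)
    (φ : V → ℝ) (hφ : ∀ i, 0 ≤ φ i) (c : ℝ) (hc : 0 < c)
    (hS : 0 ≤ ∑ i, μ i * (f i * φ i ^ α)) :
    energy μ ω h f p α (fun i => c * φ i) = energy μ ω h f p α φ := by
  have hα : (0:ℝ) < α := lt_of_lt_of_le (lt_trans one_pos hp) hpα
  have hgrad : gradEnergy ω p (fun i => c * φ i) = c ^ p * gradEnergy ω p φ := by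
    have key : ∀ i j : V, ω i j * |c * φ j - c * φ i| ^ p
        = c ^ p * (ω i j * |φ j - φ i| ^ p) := by
      intro i j
      have habs : |c * φ j - c * φ i| = c * |φ j - φ i| := by
        rw [← mul_sub, abs_mul, abs_of_pos hc]
      rw [habs, Real.mul_rpow hc.le (abs_nonneg _)]
      ring
    unfold gradEnergy
    simp_rw [key, ← Finset.mul_sum]
    ring
  have hsum : ∀ g : V → ℝ, ∀ q : ℝ,
      ∑ i, μ i * (g i * (c * φ i) ^ q) = c ^ q * ∑ i, μ i * (g i * φ i ^ q) := by
    intro g q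
    rw [Finset.mul_sum]
    refine Finset.sum_congr rfl fun i _ => ?_
    rw [Real.mul_rpow hc.le (hφ i)]
    ring
  unfold energy
  rw [hgrad, hsum h p, hsum f α, ← mul_sub,
    Real.mul_rpow (Real.rpow_nonneg hc.le α) hS,
    ← Real.rpow_mul hc.le]
  rw [mul_mul_mul_comm, ← Real.rpow_add hc]
  have : p + α * -(p / α) = 0 := by field_simp; ring
  rw [this, Real.rpow_zero, one_mul]

/-- **The infimum of the energy functional is attained**: there is `φ̂ ≥ 0`
with `∫_V f φ̂^α dμ = 1` (in particular `φ̂ ≢ 0`) and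
`I(φ̂) = β = inf {I(φ) : φ ≥ 0, φ ≢ 0}`. -/
theorem energy_infimum_attained
    {V : Type*} [Fintype V] [Nonempty V]
    (μ : V → ℝ) (hμ : ∀ i, 0 < μ i)
    (ω : V → V → ℝ) (hωsym : ∀ i j, ω i j = ω j i)
    (hωnonneg : ∀ i j, 0 ≤ ω i j) (hωloop : ∀ i, ω i i = 0)
    (h f : V → ℝ) (hf : ∀ i, 0 < f i)
    (p α : ℝ) (hp : 1 < p) (hpα : p ≤ α) :
    ∃ φhat : V → ℝ, (∀ i, 0 ≤ φhat i) ∧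
      (∑ i, μ i * (f i * φhat i ^ α) = 1) ∧
      energy μ ω h f p α φhat =
        sInf {y : ℝ | ∃ φ : V → ℝ, (∀ i, 0 ≤ φ i) ∧ φ ≠ 0 ∧
          energy μ ω h f p α φ = y} := by
  have hα : (0:ℝ) < α := lt_of_lt_of_le (lt_trans one_pos hp) hpα
  have hp0 : (0:ℝ) < p := lt_trans one_pos hp
  -- the numerator functional
  set F : (V → ℝ) → ℝ :=
    fun φ => gradEnergy ω p φ - ∑ i, μ i * (h i * φ i ^ p) with hF
  have cp : Continuous fun x : ℝ => x ^ p := Real.continuous_rpow_const hp0.le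
  have cα : Continuous fun x : ℝ => x ^ α := Real.continuous_rpow_const hα.le
  have Fcont : Continuous F := by
    apply Continuous.sub
    · exact continuous_const.mul <| continuous_finset_sum _ fun i _ =>
        continuous_finset_sum _ fun j _ => continuous_const.mul <|
          cp.comp <| ((continuous_apply j).sub (continuous_apply i)).abs
    · exact continuous_finset_sum _ fun i _ => continuous_const.mul <|
        continuous_const.mul <| cp.comp (continuous_apply i)
  -- the constraint set
  set K : Set (V → ℝ) :=
    {φ | (∀ i, 0 ≤ φ i) ∧ ∑ i, μ i * (f i * φ i ^ α) = 1} with hK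
  -- K is closed
  have Kclosed : IsClosed K := by
    have h1 : IsClosed {φ : V → ℝ | ∀ i, 0 ≤ φ i} := by
      have : {φ : V → ℝ | ∀ i, 0 ≤ φ i} = ⋂ i, {φ | 0 ≤ φ i} := by
        ext φ; simp
      rw [this]
      exact isClosed_iInter fun i => isClosed_le continuous_const (continuous_apply i)
    have h2 : IsClosed {φ : V → ℝ | ∑ i, μ i * (f i * φ i ^ α) = 1} :=
      isClosed_eq (continuous_finset_sum _ fun i _ => continuous_const.mul <|
        continuous_const.mul <| cα.comp (continuous_apply i)) continuous_const
    exact h1.inter h2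
  -- K is bounded, hence compact
  have Kcompact : IsCompact K := by
    have hsub : K ⊆ Set.Icc (0 : V → ℝ) (fun i => ((μ i * f i)⁻¹) ^ α⁻¹) := by
      rintro φ ⟨hφ0, hφ1⟩
      constructor
      · intro i; exact hφ0 i
      · intro i
        have hterm : μ i * (f i * φ i ^ α) ≤ 1 := by
          rw [← hφ1]
          exact Finset.single_le_sum (f := fun j => μ j * (f j * φ j ^ α))
            (fun j _ => mul_nonneg (hμ j).le
              (mul_nonneg (hf j).le (Real.rpow_nonneg (hφ0 j) α)))
            (Finset.mem_univ i)
        have hμf : (0:ℝ) < μ i * f i := mul_pos (hμ i) (hf i)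
        have hφα : φ i ^ α ≤ (μ i * f i)⁻¹ := by
          calc φ i ^ α = (μ i * f i)⁻¹ * (μ i * f i * φ i ^ α) := by
                exact (inv_mul_cancel_left₀ hμf.ne' _).symm
            _ ≤ (μ i * f i)⁻¹ * 1 := by
                refine mul_le_mul_of_nonneg_left ?_ (inv_nonneg.mpr hμf.le)
                rw [mul_assoc]; exact hterm
            _ = (μ i * f i)⁻¹ := mul_one _
        calc φ i = (φ i ^ α) ^ α⁻¹ := (Real.rpow_rpow_inv (hφ0 i) hα.ne').symm
          _ ≤ ((μ i * f i)⁻¹) ^ α⁻¹ :=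
              Real.rpow_le_rpow (Real.rpow_nonneg (hφ0 i) α) hφα (inv_nonneg.mpr hα.le)
    exact (isCompact_Icc).of_isClosed_subset Kclosed hsub
  -- normalization: any nonneg nonzero φ rescales into K with the same energy
  have normalize : ∀ φ : V → ℝ, (∀ i, 0 ≤ φ i) → φ ≠ 0 →
      ∃ ψ ∈ K, energy μ ω h f p α ψ = energy μ ω h f p α φ := by
    intro φ hφ0 hφne
    set S := ∑ i, μ i * (f i * φ i ^ α) with hSdef
    have hSpos : 0 < S := by
      obtain ⟨i0, hi0⟩ := Function.ne_iff.mp hφne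
      have hφi0 : 0 < φ i0 := lt_of_le_of_ne (hφ0 i0) (by simpa [eq_comm] using hi0)
      refine Finset.sum_pos' (fun j _ => mul_nonneg (hμ j).le
        (mul_nonneg (hf j).le (Real.rpow_nonneg (hφ0 j) α))) ⟨i0, Finset.mem_univ i0, ?_⟩
      exact mul_pos (hμ i0) (mul_pos (hf i0) (Real.rpow_pos_of_pos hφi0 α))
    set c := S ^ (-α⁻¹) with hcdef
    have hc : 0 < c := Real.rpow_pos_of_pos hSpos _
    refine ⟨fun i => c * φ i, ⟨fun i => mul_nonneg hc.le (hφ0 i), ?_⟩, ?_⟩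
    · have hsum : ∑ i, μ i * (f i * (c * φ i) ^ α) = c ^ α * S := by
        rw [Finset.mul_sum]
        refine Finset.sum_congr rfl fun i _ => ?_
        rw [Real.mul_rpow hc.le (hφ0 i)]
        ring
      rw [hsum, hcdef, ← Real.rpow_mul hSpos.le]
      have : -α⁻¹ * α = -1 := by field_simp
      rw [this, Real.rpow_neg_one, inv_mul_cancel₀ hSpos.ne']
    · exact energy_smul μ ω h f p α hp hpα φ hφ0 c hc hSpos.le
  -- minimize F on K
  have Knonempty : K.Nonempty := by
    obtain ⟨ψ, hψK, _⟩ := normalize (fun _ => 1) (fun _ => zero_le_one)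
      (by intro hcon; have := congrFun hcon (Classical.arbitrary V); simp at this)
    exact ⟨ψ, hψK⟩
  obtain ⟨φhat, hφhatK, hmin⟩ := Kcompact.exists_isMinOn Knonempty Fcont.continuousOn
  obtain ⟨hφhat0, hφhat1⟩ := hφhatK
  -- on K, energy = F
  have energy_eq_F : ∀ φ ∈ K, energy μ ω h f p α φ = F φ := by
    rintro φ ⟨-, hφ1⟩
    unfold energy
    rw [hφ1, Real.one_rpow, mul_one]
  have hφhatne : φhat ≠ 0 := by
    intro hcon
    rw [hcon] at hφhat1
    simp [Real.zero_rpow hα.ne'] at hφhat1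
  refine ⟨φhat, hφhat0, hφhat1, ?_⟩
  have hlb : ∀ y ∈ {y : ℝ | ∃ φ : V → ℝ, (∀ i, 0 ≤ φ i) ∧ φ ≠ 0 ∧
      energy μ ω h f p α φ = y}, energy μ ω h f p α φhat ≤ y := by
    rintro y ⟨φ, hφ0, hφne, rfl⟩
    obtain ⟨ψ, hψK, hψE⟩ := normalize φ hφ0 hφne
    rw [← hψE, energy_eq_F ψ hψK, energy_eq_F φhat ⟨hφhat0, hφhat1⟩]
    exact hmin hψK
  refine le_antisymm
    (le_csInf ⟨energy μ ω h f p α φhat, ⟨φhat, hφhat0, hφhatne, rfl⟩⟩ hlb)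
    (csInf_le ⟨energy μ ω h f p α φhat, hlb⟩ ⟨φhat, hφhat0, hφhatne, rfl⟩)
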